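/- The underlying multigraph functor U from quivers to multigraphs does not admit a right adjoint, because it is a left adjoint whose right adjoint D⃗ (the associated digraph functor) fails to preserve coequalizers; equivalently, D⃗ is not cocontinuous. -/

import Mathlib

/-- A set-system hypergraph. -/
structure SSHyp : Type 1 where
  E : Type
  V : Type
  eps : E → Set V

/-- A multigraph is a set-system hypergraph all of whose edges have 1 or 2 endpoints. -/
def IsMulti (M : SSHyp) : Prop := ∀ e, ∃ v w, M.eps e = {v, w}

/-- A traditional set-system hypergraph homomorphism. -/
structure TradHom (G H : SSHyp) where
  fe : G.E → H.E
  fv : G.V → H.V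
  comm : ∀ e, H.eps (fe e) = fv '' G.eps e

def TradHom.comp {G H K : SSHyp} (φ : TradHom G H) (ψ : TradHom H K) : TradHom G K :=
  ⟨ψ.fe ∘ φ.fe, ψ.fv ∘ φ.fv, fun e => by
    rw [Function.comp_apply, ψ.comm, φ.comm, Set.image_comp]⟩

/-- A quiver. -/
structure Quiv : Type 1 where
  V : Type
  E : Type
  s : E → V
  t : E → V

/-- A quiver homomorphism. -/
structure QuivHom (Q Q' : Quiv) where
  fv : Q.V → Q'.V
  fe : Q.E → Q'.E
  hs : ∀ e, Q'.s (fe e) = fv (Q.s e)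
  ht : ∀ e, Q'.t (fe e) = fv (Q.t e)

def QuivHom.comp {A B C : Quiv} (φ : QuivHom A B) (ψ : QuivHom B C) : QuivHom A C :=
  ⟨ψ.fv ∘ φ.fv, ψ.fe ∘ φ.fe,
    fun e => by simp [ψ.hs, φ.hs], fun e => by simp [ψ.ht, φ.ht]⟩

/-- `D⃗`: the associated digraph (quiver) of a multigraph. -/
def Dvec (M : SSHyp) : Quiv :=
  ⟨M.V, {q : M.E × M.V × M.V // M.eps q.1 = {q.2.1, q.2.2}},
    fun q => q.val.2.1, fun q => q.val.2.2⟩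

/-- The action of `D⃗` on traditional homomorphisms. -/
def DvecHom {M M' : SSHyp} (ψ : TradHom M M') : QuivHom (Dvec M) (Dvec M') :=
  ⟨ψ.fv,
    fun q => ⟨(ψ.fe q.val.1, ψ.fv q.val.2.1, ψ.fv q.val.2.2), by
      show M'.eps (ψ.fe q.val.1) = _
      rw [ψ.comm, q.property, Set.image_insert_eq, Set.image_singleton]⟩,
    fun q => rfl, fun q => rfl⟩

/-- `q` is a coequalizer of `f, g` in the category of multigraphs. -/
def IsCoeqM {A B C : SSHyp} (f g : TradHom A B) (q : TradHom B C) : Prop :=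
  f.comp q = g.comp q ∧
  ∀ (D : SSHyp), IsMulti D → ∀ h : TradHom B D, f.comp h = g.comp h →
    ∃! k : TradHom C D, q.comp k = h

/-- `q` is a coequalizer of `f, g` in the category of quivers. -/
def IsCoeqQ {A B C : Quiv} (f g : QuivHom A B) (q : QuivHom B C) : Prop :=
  f.comp q = g.comp q ∧
  ∀ (D : Quiv) (h : QuivHom B D), f.comp h = g.comp h →
    ∃! k : QuivHom C D, q.comp k = h


lemma TradHom.ext' {G H : SSHyp} {φ ψ : TradHom G H}
    (he : φ.fe = ψ.fe) (hv : φ.fv = ψ.fv) : φ = ψ := by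
  cases φ; cases ψ; cases he; cases hv; rfl

lemma QuivHom.ext' {Q Q' : Quiv} {φ ψ : QuivHom Q Q'}
    (hv : φ.fv = ψ.fv) (he : φ.fe = ψ.fe) : φ = ψ := by
  cases φ; cases ψ; cases hv; cases he; rfl

lemma DvecHom_comp {M M' M'' : SSHyp} (φ : TradHom M M') (ψ : TradHom M' M'') :
    DvecHom (φ.comp ψ) = (DvecHom φ).comp (DvecHom ψ) := by
  apply QuivHom.ext' rfl
  funext q
  exact Subtype.ext rfl

lemma QuivHom.comp_assoc {A B C D : Quiv} (φ : QuivHom A B) (ψ : QuivHom B C)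
    (χ : QuivHom C D) : (φ.comp ψ).comp χ = φ.comp (ψ.comp χ) :=
  QuivHom.ext' rfl rfl

/-- If `D⃗` had a right adjoint (relative to multigraphs), it would preserve
coequalizers of multigraphs. -/
lemma adj_preserves
    (R : Quiv → SSHyp) (hR : ∀ Q, IsMulti (R Q))
    (θ : ∀ Q : Quiv, QuivHom (Dvec (R Q)) Q)
    (hadj : ∀ (M : SSHyp), IsMulti M → ∀ (Q : Quiv) (φ : QuivHom (Dvec M) Q),
      ∃! φh : TradHom M (R Q), (DvecHom φh).comp (θ Q) = φ)
    {A B C : SSHyp} (hA : IsMulti A) (hB : IsMulti B) (hC : IsMulti C)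
    (f g : TradHom A B) (q : TradHom B C) (hq : IsCoeqM f g q) :
    IsCoeqQ (DvecHom f) (DvecHom g) (DvecHom q) := by
  constructor
  · rw [← DvecHom_comp, ← DvecHom_comp, hq.1]
  · intro D h hfg
    obtain ⟨hh, hhT, hhU⟩ := hadj B hB D h
    have hfgh : f.comp hh = g.comp hh := by
      have h1 : (DvecHom (f.comp hh)).comp (θ D) = (DvecHom f).comp h := by
        rw [DvecHom_comp, QuivHom.comp_assoc, hhT]
      have h2 : (DvecHom (g.comp hh)).comp (θ D) = (DvecHom f).comp h := by
        rw [DvecHom_comp, QuivHom.comp_assoc, hhT, hfg]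
      obtain ⟨w, _, wU⟩ := hadj A hA D ((DvecHom f).comp h)
      rw [wU _ h1, wU _ h2]
    obtain ⟨kh, khT, khU⟩ := hq.2 (R D) (hR D) hh hfgh
    refine ⟨(DvecHom kh).comp (θ D), ?_, ?_⟩
    · show (DvecHom q).comp ((DvecHom kh).comp (θ D)) = h
      rw [← QuivHom.comp_assoc, ← DvecHom_comp, khT, hhT]
    · intro k' hk'
      obtain ⟨kh', kh'T, _⟩ := hadj C hC D k'
      have : q.comp kh' = hh := by
        apply hhU
        rw [DvecHom_comp, QuivHom.comp_assoc, kh'T]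
        exact hk'
      rw [← kh'T, khU _ this]

/-- One vertex, no edges. -/
def MA : SSHyp := ⟨Empty, Unit, fun e => e.elim⟩

/-- One 2-edge with endpoints `false`, `true`. -/
def MB : SSHyp := ⟨Unit, Bool, fun _ => {false, true}⟩

/-- One vertex with a loop. -/
def MC : SSHyp := ⟨Unit, Unit, fun _ => {()}⟩

def fAB : TradHom MA MB := ⟨Empty.elim, fun _ => false, fun e => e.elim⟩
def gAB : TradHom MA MB := ⟨Empty.elim, fun _ => true, fun e => e.elim⟩
def qBC : TradHom MB MC := ⟨id, fun _ => (), fun _ => by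
  ext x; simp [MB, MC]⟩

/-- The test quiver: one vertex, two loops. -/
def DQ : Quiv := ⟨Unit, Bool, fun _ => (), fun _ => ()⟩

/-- The test cocone map sending the two arcs of `D⃗ MB` to the two loops of `DQ`. -/
def hTest : QuivHom (Dvec MB) DQ :=
  ⟨fun _ => (), fun e => e.val.2.1, fun _ => rfl, fun _ => rfl⟩

/-- One of the two arcs of `D⃗ MB`. -/
def e1 : (Dvec MB).E := ⟨((), false, true), rfl⟩

/-- The other arc of `D⃗ MB`. -/
def e2 : (Dvec MB).E := ⟨((), true, false), Set.pair_comm false true⟩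

/-- The associated digraph functor `D⃗` (the right adjoint of the underlying multigraph
functor `U`) is not cocontinuous: it fails to preserve a coequalizer of multigraphs,
and consequently `D⃗` does not itself admit a right adjoint (so `U ⊣ D⃗` does not extend
to a further adjunction). -/
theorem associated_digraph_not_cocontinuous :
    (∃ (A B C : SSHyp), IsMulti A ∧ IsMulti B ∧ IsMulti C ∧
      ∃ (f g : TradHom A B) (q : TradHom B C), IsCoeqM f g q ∧
        ¬ IsCoeqQ (DvecHom f) (DvecHom g) (DvecHom q)) ∧
    ¬ ∃ (R : Quiv → SSHyp) (_ : ∀ Q, IsMulti (R Q))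
        (θ : ∀ Q : Quiv, QuivHom (Dvec (R Q)) Q),
      ∀ (M : SSHyp), IsMulti M → ∀ (Q : Quiv) (φ : QuivHom (Dvec M) Q),
        ∃! φh : TradHom M (R Q), (DvecHom φh).comp (θ Q) = φ := by
  have part1 : IsCoeqM fAB gAB qBC ∧ ¬ IsCoeqQ (DvecHom fAB) (DvecHom gAB) (DvecHom qBC) := by
    constructor
    · constructor
      · exact TradHom.ext' (funext fun e => e.elim) (funext fun _ => rfl)
      · intro D _ h hfg
        have hv : h.fv false = h.fv true := congrFun (congrArg TradHom.fv hfg) ()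
        refine ⟨⟨h.fe, fun _ => h.fv false, fun e => ?_⟩, ?_, ?_⟩
        · show D.eps (h.fe e) = _
          rw [h.comm e]
          ext x
          simp [MB, MC, ← hv, eq_comm]
        · refine TradHom.ext' rfl (funext fun b => ?_)
          cases b
          · rfl
          · exact hv
        · intro k' hk'
          refine TradHom.ext' ?_ ?_
          · have h1 := congrArg TradHom.fe hk'
            exact h1
          · funext u
            have h2 := congrFun (congrArg TradHom.fv hk') false
            exact h2
    · rintro ⟨-, huniv⟩
      obtain ⟨k, hk, -⟩ := huniv DQ hTest (QuivHom.ext' rfl (funext fun e => e.val.1.elim))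
      have hfe1 := congrFun (congrArg QuivHom.fe hk) e1
      have hfe2 := congrFun (congrArg QuivHom.fe hk) e2
      have heq : (DvecHom qBC).fe e1 = (DvecHom qBC).fe e2 := Subtype.ext rfl
      have hbad : hTest.fe e1 = hTest.fe e2 := by
        rw [← hfe1, ← hfe2]
        show k.fe ((DvecHom qBC).fe e1) = k.fe ((DvecHom qBC).fe e2)
        rw [heq]
      exact Bool.noConfusion hbad
  have hMA : IsMulti MA := fun e => e.elim
  have hMB : IsMulti MB := fun _ => ⟨false, true, rfl⟩
  have hMC : IsMulti MC := fun _ => ⟨(), (), by exact (Set.pair_eq_singleton ()).symm⟩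
  constructor
  · exact ⟨MA, MB, MC, hMA, hMB, hMC, fAB, gAB, qBC, part1.1, part1.2⟩
  · rintro ⟨R, hR, θ, hadj⟩
    exact part1.2 (adj_preserves R hR θ hadj hMA hMB hMC fAB gAB qBC part1.1)
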